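/- Suppose there exists c > 0 such that the number of rational points p/q ∈ Sⁿ with q ≤ N is at most c·Nⁿ for every N ≥ 1. If φ : ℕ → (0,∞) is non-increasing and ∑_{k=1}^∞ k^{n−1} φ(k)^n < ∞, then λ(A(φ,Sⁿ)) = 0. -/

import Mathlib

open MeasureTheory Filter
open scoped ENNReal NNReal Topology

/-- The unit Euclidean sphere `Sⁿ` in `ℝ^{n+1}` (the ambient space `Fin (n+1) → ℝ`
carries the supremum norm). -/
noncomputable def unitSphere (n : ℕ) : Set (Fin (n + 1) → ℝ) :=
  {x | ∑ i, x i ^ 2 = 1}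

/-- The rational point `p/q` in `ℝ^{n+1}`. -/
noncomputable def ratPt (n : ℕ) (p : Fin (n + 1) → ℤ) (q : ℕ) : Fin (n + 1) → ℝ :=
  fun i => (p i : ℝ) / (q : ℝ)

/-- `A(φ,Sⁿ)`: the set of points of `Sⁿ` which are `φ`-approximable in `Sⁿ`. -/
noncomputable def approxSet (n : ℕ) (φ : ℕ → ℝ) : Set (Fin (n + 1) → ℝ) :=
  {α | α ∈ unitSphere n ∧
    {pq : (Fin (n + 1) → ℤ) × ℕ | 0 < pq.2 ∧ ratPt n pq.1 pq.2 ∈ unitSphere n ∧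
      ‖α - ratPt n pq.1 pq.2‖ < φ pq.2}.Infinite}

/-- The set of rational points of `Sⁿ` with (some) positive denominator at most `N`. -/
noncomputable def ratPtsUpTo (n : ℕ) (N : ℝ) : Set (Fin (n + 1) → ℝ) :=
  {x | x ∈ unitSphere n ∧ ∃ (p : Fin (n + 1) → ℤ) (q : ℕ), 0 < q ∧ (q : ℝ) ≤ N ∧
    x = ratPt n p q}

lemma pairsBounded_finite (n M : ℕ) :
    {pq : (Fin (n + 1) → ℤ) × ℕ | 0 < pq.2 ∧ ratPt n pq.1 pq.2 ∈ unitSphere n ∧ pq.2 < M}.Finite := by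
  apply Set.Finite.subset
    (Set.Finite.prod (Set.Finite.pi (fun _ : Fin (n+1) => Set.finite_Icc (-(M:ℤ)) M))
      (Set.finite_Iio M))
  rintro ⟨p, q⟩ ⟨hq, hS, hqM⟩
  refine ⟨fun i _ => ?_, hqM⟩
  have hq0 : (0:ℝ) < (q:ℝ) := by exact_mod_cast hq
  have hterm : ((p i : ℝ) / q) ^ 2 ≤ 1 := by
    have := Finset.single_le_sum (f := fun j => (ratPt n p q j)^2)
      (fun j _ => sq_nonneg _) (Finset.mem_univ i)
    rw [hS] at this
    simpa [ratPt] using this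
  have h2 : ((p i:ℝ))^2 / (q:ℝ)^2 ≤ 1 := by rw [← div_pow]; exact hterm
  have h3 : ((p i:ℝ))^2 ≤ (q:ℝ)^2 := (div_le_one (by positivity)).mp h2
  have habs : |(p i : ℝ)| ≤ (q:ℝ) := by
    nlinarith [h3, sq_abs ((p i:ℝ)), abs_nonneg ((p i:ℝ))]
  have : |(p i : ℝ)| ≤ (M:ℝ) := habs.trans (by exact_mod_cast hqM.le)
  have : |p i| ≤ (M:ℤ) := by exact_mod_cast (by push_cast; exact this : (|p i| : ℝ) ≤ (M:ℝ))
  simp only [Set.mem_Icc]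
  exact abs_le.mp this

lemma condensed_summable (n : ℕ) (hn : 1 ≤ n) (φ : ℕ → ℝ) (hφpos : ∀ k, 0 < φ k)
    (hφanti : Antitone φ)
    (hsum : Summable (fun k : ℕ => ((k : ℝ) + 1) ^ (n - 1) * φ (k + 1) ^ n)) :
    Summable (fun k : ℕ => (2:ℝ) ^ (k * n) * φ (2 ^ (k+1)) ^ n) := by
  set h : ℕ → ℝ := fun k => ((k : ℝ) + 1) ^ (n - 1) * φ (k + 1) ^ n with hh
  have hh0 : ∀ m, 0 ≤ h m := fun m => by
    have := (hφpos (m+1)).le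
    positivity
  apply summable_of_sum_range_le (c := ∑' m, h m)
  · intro k
    have := (hφpos (2^(k+1))).le
    positivity
  intro K
  have block : ∀ k : ℕ, (2:ℝ) ^ (k * n) * φ (2 ^ (k+1)) ^ n
      ≤ ∑ m ∈ Finset.Ico (2^k) (2^(k+1)), h m := by
    intro k
    have hcard : (Finset.Ico (2^k) (2^(k+1))).card = 2^k := by
      rw [Nat.card_Ico]; ring_nf; omega
    have hexp : k * n = k + k * (n-1) := by
      have h1 : n - 1 + 1 = n := by omega
      calc k * n = k * (n - 1 + 1) := by rw [h1]
        _ = k + k * (n-1) := by ring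
    calc (2:ℝ) ^ (k * n) * φ (2 ^ (k+1)) ^ n
        = ∑ m ∈ Finset.Ico (2^k) (2^(k+1)), (2:ℝ)^(k*(n-1)) * φ (2^(k+1)) ^ n := by
          rw [Finset.sum_const, hcard, nsmul_eq_mul]
          push_cast
          rw [← mul_assoc, ← pow_add, ← hexp]
      _ ≤ ∑ m ∈ Finset.Ico (2^k) (2^(k+1)), h m := by
          apply Finset.sum_le_sum
          intro m hm
          rw [Finset.mem_Ico] at hm
          have hb : (2:ℝ)^k ≤ (m:ℝ) + 1 := by
            have : (2^k : ℕ) ≤ m + 1 := by omega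
            exact_mod_cast this
          have h1 : (2:ℝ)^(k*(n-1)) ≤ ((m:ℝ)+1)^(n-1) := by
            rw [pow_mul]
            exact pow_le_pow_left₀ (by positivity) hb (n-1)
          have h2 : φ (2^(k+1)) ^ n ≤ φ (m+1) ^ n :=
            pow_le_pow_left₀ (hφpos _).le (hφanti (by omega)) n
          exact mul_le_mul h1 h2 (pow_nonneg (hφpos _).le n) (by positivity)
  calc ∑ k ∈ Finset.range K, (2:ℝ) ^ (k * n) * φ (2 ^ (k+1)) ^ n
      ≤ ∑ k ∈ Finset.range K, ∑ m ∈ Finset.Ico (2^k) (2^(k+1)), h m :=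
        Finset.sum_le_sum fun k _ => block k
    _ = ∑ m ∈ Finset.Ico (2^0) (2^K), h m := by
        induction K with
        | zero => simp
        | succ K ih =>
          rw [Finset.sum_range_succ, ih, Finset.sum_Ico_consecutive]
          · exact Nat.one_le_two_pow
          · exact Nat.pow_le_pow_right (by norm_num) (by omega)
    _ ≤ ∑ m ∈ Finset.range (2^K), h m := by
        apply Finset.sum_le_sum_of_subset_of_nonneg
        · intro m hm
          rw [Finset.mem_Ico] at hm; rw [Finset.mem_range]; omega
        · intro m _ _; exact hh0 m
    _ ≤ ∑' m, h m := Summable.sum_le_tsum _ (fun m _ => hh0 m) hsum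

lemma cap_bound (n : ℕ) (hn : 1 ≤ n) (x : Fin (n+1) → ℝ) (hx : x ∈ unitSphere n)
    {r : ℝ} (hr0 : 0 < r) (hr : r ≤ 1/(2*((n:ℝ)+1))) :
    μH[(n:ℝ)] (Metric.closedBall x r ∩ unitSphere n) ≤
      ENNReal.ofReal ((2*(n:ℝ)*((n:ℝ)+1))^n * (2*r)^n) := by
  classical
  have hn1 : (0:ℝ) < (n:ℝ) + 1 := by positivity
  -- find a big coordinate
  obtain ⟨i, hi⟩ : ∃ i : Fin (n+1), 1/((n:ℝ)+1) ≤ x i ^ 2 := by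
    by_contra hcon
    push_neg at hcon
    have : ∑ j, x j ^ 2 < ∑ _j : Fin (n+1), 1/((n:ℝ)+1) :=
      Finset.sum_lt_sum_of_nonempty (by simp) (fun j _ => hcon j)
    rw [hx] at this
    simp only [Finset.sum_const, Finset.card_univ, Fintype.card_fin, nsmul_eq_mul] at this
    rw [mul_one_div] at this
    push_cast at this
    rw [div_self (ne_of_gt hn1)] at this
    exact lt_irrefl 1 this
  have hxi : 1/((n:ℝ)+1) ≤ |x i| := by
    by_contra hcon
    push_neg at hcon
    have h1 : |x i|^2 < (1/((n:ℝ)+1))^2 := by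
      apply sq_lt_sq' _ hcon
      have : (0:ℝ) < 1/((n:ℝ)+1) := by positivity
      linarith [abs_nonneg (x i)]
    rw [sq_abs] at h1
    have hle1 : 1/((n:ℝ)+1) ≤ 1 := by
      rw [div_le_one hn1]; linarith
    have hp : (0:ℝ) < 1/((n:ℝ)+1) := by positivity
    have h2 : (1/((n:ℝ)+1))^2 ≤ 1/((n:ℝ)+1) := by
      rw [sq]
      nlinarith
    linarith
  set ρ : ℝ := 1/(2*((n:ℝ)+1)) with hρ
  have hρ0 : 0 < ρ := by positivity
  set s : ℝ := if 0 ≤ x i then 1 else -1 with hs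
  have hs1 : |s| = 1 := by rw [hs]; split <;> simp
  have hsxi : s * x i = |x i| := by
    rw [hs]; split
    · rw [one_mul, abs_of_nonneg ‹_›]
    · rw [neg_one_mul, abs_of_neg (by linarith [not_le.mp ‹_›])]
  set cap := Metric.closedBall x r ∩ unitSphere n with hcap
  -- facts about points in cap
  have capfact : ∀ z ∈ cap, ρ ≤ s * z i ∧ (∀ j, z j ^ 2 ≤ 1) ∧
      ∑ j : Fin n, (i.removeNth z j)^2 = 1 - z i ^ 2 := by
    rintro z ⟨hzb, hzS⟩
    have hdi : |z i - x i| ≤ r := by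
      have := dist_le_pi_dist z x i
      rw [Metric.mem_closedBall] at hzb
      rw [Real.dist_eq] at this
      exact this.trans hzb
    have hszi : ρ ≤ s * z i := by
      have h1 : s * z i = s * x i + s * (z i - x i) := by ring
      have h2 : -(r:ℝ) ≤ s * (z i - x i) := by
        have := abs_le.mp (by rw [abs_mul, hs1, one_mul]; exact hdi : |s * (z i - x i)| ≤ r)
        exact this.1
      have h3 : 2 * ρ ≤ |x i| := by
        have : 2 * ρ = 1/((n:ℝ)+1) := by rw [hρ]; field_simp
        rw [this]; exact hxi
      linarith
    refine ⟨hszi, ?_, ?_⟩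
    · intro j
      have := Finset.single_le_sum (f := fun j => z j ^ 2) (fun j _ => sq_nonneg _)
        (Finset.mem_univ j)
      rw [hzS] at this; exact this
    · have := Fin.sum_univ_succAbove (fun j => z j ^ 2) i
      rw [hzS] at this
      have : ∑ j : Fin n, z (i.succAbove j) ^ 2 = 1 - z i ^ 2 := by linarith
      simpa [Fin.removeNth] using this
  set A : (Fin n → ℝ) → ℝ := fun y => 1 - ∑ j, y j ^ 2 with hA
  set g : (Fin n → ℝ) → (Fin (n+1) → ℝ) := fun y => i.insertNth (s * Real.sqrt (A y)) y with hg
  set T : Set (Fin n → ℝ) := i.removeNth '' cap with hT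
  have hs2 : s^2 = 1 := by rw [← sq_abs, hs1]; norm_num
  have hArm : ∀ z ∈ cap, A (i.removeNth z) = z i ^ 2 := by
    intro z hz
    obtain ⟨-, -, h3⟩ := capfact z hz
    rw [hA]
    simp only
    rw [h3]
    ring
  have hsqrtA : ∀ z ∈ cap, Real.sqrt (A (i.removeNth z)) = s * z i := by
    intro z hz
    obtain ⟨h1, -, -⟩ := capfact z hz
    rw [hArm z hz, Real.sqrt_sq_eq_abs]
    have : |z i| = |s * z i| := by rw [abs_mul, hs1, one_mul]
    rw [this, abs_of_nonneg (le_trans hρ0.le h1)]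
  have hgz : ∀ z ∈ cap, g (i.removeNth z) = z := by
    intro z hz
    rw [hg]
    simp only
    rw [hsqrtA z hz, ← mul_assoc, ← sq, hs2, one_mul]
    exact Fin.insertNth_self_removeNth i z
  have hsub : cap ⊆ g '' T := by
    intro z hz
    exact ⟨i.removeNth z, ⟨z, hz, rfl⟩, hgz z hz⟩
  -- facts about points of T
  have Tfact : ∀ y ∈ T, (∀ j, |y j| ≤ 1) ∧ ρ ≤ Real.sqrt (A y) ∧ 0 ≤ A y := by
    rintro y ⟨z, hz, rfl⟩
    obtain ⟨h1, h2, -⟩ := capfact z hz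
    refine ⟨fun j => ?_, ?_, ?_⟩
    · have hthis := h2 (i.succAbove j)
      have hrm : i.removeNth z j = z (i.succAbove j) := rfl
      rw [hrm, abs_le]
      constructor <;> nlinarith [hthis]
    · rw [hsqrtA z hz]; exact h1
    · rw [hArm z hz]; positivity
  -- Lipschitz constant
  set L : ℝ≥0 := 2*(n:ℝ≥0)*((n:ℝ≥0)+1) with hL
  have hL1 : (1:ℝ≥0) ≤ L := by
    rw [hL]
    have : (1:ℝ≥0) ≤ (n:ℝ≥0) := by exact_mod_cast hn
    calc (1:ℝ≥0) ≤ 2*1*(1+1) := by norm_num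
      _ ≤ 2*(n:ℝ≥0)*((n:ℝ≥0)+1) := by gcongr
  have hLip : LipschitzOnWith L g T := by
    apply LipschitzOnWith.of_dist_le_mul
    intro y hy y' hy'
    obtain ⟨hy1, hy2, hy3⟩ := Tfact y hy
    obtain ⟨hy1', hy2', hy3'⟩ := Tfact y' hy'
    have hd0 : (0:ℝ) ≤ (L:ℝ) * dist y y' := by positivity
    rw [dist_pi_le_iff hd0]
    intro j
    by_cases hji : j = i
    · subst hji
      rw [hg]
      simp only [Fin.insertNth_apply_same]
      rw [Real.dist_eq]
      have key : |Real.sqrt (A y) - Real.sqrt (A y')| ≤ ((n:ℝ)+1) * |A y - A y'| := by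
        have hsum : Real.sqrt (A y) + Real.sqrt (A y') ≥ 2 * ρ := by linarith
        have hdiff : (Real.sqrt (A y) - Real.sqrt (A y')) * (Real.sqrt (A y) + Real.sqrt (A y'))
            = A y - A y' := by
          have e1 : Real.sqrt (A y) ^ 2 = A y := Real.sq_sqrt hy3
          have e2 : Real.sqrt (A y') ^ 2 = A y' := Real.sq_sqrt hy3'
          nlinarith [e1, e2]
        have habs : |Real.sqrt (A y) - Real.sqrt (A y')| * (2*ρ) ≤ |A y - A y'| := by
          calc |Real.sqrt (A y) - Real.sqrt (A y')| * (2*ρ)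
              ≤ |Real.sqrt (A y) - Real.sqrt (A y')| * (Real.sqrt (A y) + Real.sqrt (A y')) := by
                apply mul_le_mul_of_nonneg_left hsum (abs_nonneg _)
            _ = |A y - A y'| := by
                rw [← abs_of_nonneg (by positivity : (0:ℝ) ≤ Real.sqrt (A y) + Real.sqrt (A y')),
                  ← abs_mul, hdiff]
        have h2ρ : 2 * ρ = 1/((n:ℝ)+1) := by rw [hρ]; field_simp
        rw [h2ρ] at habs
        have := mul_le_mul_of_nonneg_left habs (le_of_lt hn1)
        calc |Real.sqrt (A y) - Real.sqrt (A y')|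
            = ((n:ℝ)+1) * (|Real.sqrt (A y) - Real.sqrt (A y')| * (1/((n:ℝ)+1))) := by
              field_simp
          _ ≤ ((n:ℝ)+1) * |A y - A y'| := this
      have keyA : |A y - A y'| ≤ 2*(n:ℝ) * dist y y' := by
        have e : A y - A y' = ∑ j, (y' j ^2 - y j ^2) := by
          rw [hA]; simp only; rw [Finset.sum_sub_distrib]; ring
        rw [e]
        calc |∑ j, (y' j ^2 - y j ^2)| ≤ ∑ j : Fin n, |y' j ^2 - y j ^2| :=
              Finset.abs_sum_le_sum_abs _ _
          _ ≤ ∑ _j : Fin n, 2 * dist y y' := by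
              apply Finset.sum_le_sum
              intro j _
              have e2 : y' j ^2 - y j ^2 = (y' j - y j) * (y' j + y j) := by ring
              rw [e2, abs_mul]
              have b1 : |y' j - y j| ≤ dist y y' := by
                rw [← Real.dist_eq, dist_comm y y']
                exact dist_le_pi_dist y' y j
              have b2 : |y' j + y j| ≤ 2 := by
                calc |y' j + y j| ≤ |y' j| + |y j| := abs_add_le _ _
                  _ ≤ 1 + 1 := add_le_add (hy1' j) (hy1 j)
                  _ = 2 := by norm_num
              calc |y' j - y j| * |y' j + y j| ≤ dist y y' * 2 :=
                    mul_le_mul b1 b2 (abs_nonneg _) dist_nonneg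
                _ = 2 * dist y y' := by ring
          _ = 2*(n:ℝ) * dist y y' := by
              rw [Finset.sum_const, Finset.card_univ, Fintype.card_fin, nsmul_eq_mul]; ring
      calc dist (s * Real.sqrt (A y)) (s * Real.sqrt (A y'))
          = |Real.sqrt (A y) - Real.sqrt (A y')| := by
            rw [Real.dist_eq, ← mul_sub, abs_mul, hs1, one_mul]
        _ ≤ ((n:ℝ)+1) * (2*(n:ℝ) * dist y y') := by
            refine key.trans ?_
            apply mul_le_mul_of_nonneg_left keyA (le_of_lt hn1)
        _ = (L:ℝ) * dist y y' := by rw [hL]; push_cast; ring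
    · obtain ⟨k, rfl⟩ := Fin.exists_succAbove_eq hji
      rw [hg]
      simp only [Fin.insertNth_apply_succAbove]
      calc dist (y k) (y' k) ≤ dist y y' := dist_le_pi_dist y y' k
        _ ≤ (L:ℝ) * dist y y' := by
            apply le_mul_of_one_le_left dist_nonneg
            exact_mod_cast hL1
  -- T is inside a small ball
  have hTball : T ⊆ Metric.closedBall (i.removeNth x) r := by
    rintro y ⟨z, ⟨hzb, -⟩, rfl⟩
    rw [Metric.mem_closedBall]
    rw [dist_pi_le_iff hr0.le]
    intro j
    exact (dist_le_pi_dist z x (i.succAbove j)).trans (Metric.mem_closedBall.mp hzb)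
  have hμT : μH[(n:ℝ)] T ≤ ENNReal.ofReal ((2*r)^n) := by
    have hcard : ((Fintype.card (Fin n) : ℝ)) = (n:ℝ) := by simp
    rw [← hcard, hausdorffMeasure_pi_real]
    calc volume T ≤ volume (Metric.closedBall (i.removeNth x) r) := measure_mono hTball
      _ = ENNReal.ofReal ((2*r)^Fintype.card (Fin n)) := Real.volume_pi_closedBall _ hr0.le
      _ = ENNReal.ofReal ((2*r)^n) := by rw [Fintype.card_fin]
  calc μH[(n:ℝ)] cap ≤ μH[(n:ℝ)] (g '' T) := measure_mono hsub
    _ ≤ (L:ℝ≥0∞)^(n:ℝ) * μH[(n:ℝ)] T :=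
        hLip.hausdorffMeasure_image_le (by positivity)
    _ ≤ (L:ℝ≥0∞)^(n:ℝ) * ENNReal.ofReal ((2*r)^n) := by gcongr
    _ = ENNReal.ofReal ((2*(n:ℝ)*((n:ℝ)+1))^n * (2*r)^n) := by
        have hLr : ((L:ℝ≥0∞))^(n:ℝ) = ENNReal.ofReal ((2*(n:ℝ)*((n:ℝ)+1))^n) := by
          rw [ENNReal.rpow_natCast, ← ENNReal.coe_pow, ← ENNReal.ofReal_coe_nnreal]
          congr 1
        rw [hLr, ← ENNReal.ofReal_mul (by positivity)]

/-- Convergence case of Khintchine's theorem for the sphere, assuming the counting bound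
`#{p/q ∈ Sⁿ : q ≤ N} ≤ c·Nⁿ`: if `φ : ℕ → (0,∞)` is non-increasing and
`∑_{k≥1} k^{n−1} φ(k)^n < ∞`, then `λ(A(φ,Sⁿ)) = 0`, where `λ` is the `n`-dimensional
Hausdorff measure restricted to `Sⁿ`. -/
theorem convergence_khintchine_sphere (n : ℕ) (hn : 1 ≤ n)
    (c : ℝ) (hc : 0 < c)
    (hcount : ∀ N : ℝ, 1 ≤ N → (ratPtsUpTo n N).Finite ∧
      ((ratPtsUpTo n N).ncard : ℝ) ≤ c * N ^ n)
    (φ : ℕ → ℝ) (hφpos : ∀ k, 0 < φ k) (hφanti : Antitone φ)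
    (hsum : Summable (fun k : ℕ => ((k : ℝ) + 1) ^ (n - 1) * φ (k + 1) ^ n)) :
    (μH[(n : ℝ)]).restrict (unitSphere n) (approxSet n φ) = 0 := by
  classical
  have hSmeas : MeasurableSet (unitSphere n) := by
    have : unitSphere n = (fun x : Fin (n+1) → ℝ => ∑ i, x i ^ 2) ⁻¹' {1} := rfl
    rw [this]
    exact ((by continuity : Continuous (fun x : Fin (n+1) → ℝ => ∑ i, x i ^ 2)).measurable)
      (measurableSet_singleton 1)
  set Cset : ℕ → Set (Fin (n+1) → ℝ) :=
    fun k => ⋃ x ∈ ratPtsUpTo n ((2:ℝ)^(k+1)), Metric.closedBall x (φ (2^k)) with hCset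
  -- Step 1: covering
  have hcover : ∀ K : ℕ, approxSet n φ ⊆ ⋃ j : ℕ, Cset (j + K) := by
    intro K α hα
    obtain ⟨hαS, hinf⟩ := hα
    obtain ⟨⟨p, q⟩, hmem, hnot⟩ := (hinf.diff (pairsBounded_finite n (2^K))).nonempty
    obtain ⟨hq, hSq, happ⟩ := hmem
    have hqK : 2^K ≤ q := by
      by_contra h
      exact hnot ⟨hq, hSq, by omega⟩
    set k := Nat.log 2 q with hk
    have hk1 : 2^k ≤ q := Nat.pow_log_le_self 2 (by omega)
    have hk2 : q < 2^(k+1) := Nat.lt_pow_succ_log_self (by norm_num) q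
    have hKk : K ≤ k := by
      by_contra h
      push_neg at h
      have : (2:ℕ)^(k+1) ≤ 2^K := Nat.pow_le_pow_right (by norm_num) (by omega)
      omega
    refine Set.mem_iUnion.mpr ⟨k - K, ?_⟩
    have hkK : k - K + K = k := by omega
    rw [hkK]
    have hmem1 : ratPt n p q ∈ ratPtsUpTo n ((2:ℝ)^(k+1)) := by
      refine ⟨hSq, p, q, hq, ?_, rfl⟩
      have h0 : (q:ℝ) ≤ ((2^(k+1) : ℕ) : ℝ) := by exact_mod_cast hk2.le
      calc (q:ℝ) ≤ ((2^(k+1) : ℕ) : ℝ) := h0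
        _ = (2:ℝ)^(k+1) := by push_cast; ring
    have hmem2 : α ∈ Metric.closedBall (ratPt n p q) (φ (2^k)) := by
      rw [Metric.mem_closedBall, dist_eq_norm]
      exact le_trans happ.le (hφanti hk1)
    exact Set.mem_biUnion hmem1 hmem2
  -- small radius threshold
  set r₀ : ℝ := 1/(2*((n:ℝ)+1)) with hr₀
  have hr₀pos : 0 < r₀ := by positivity
  obtain ⟨K₀, hK₀⟩ : ∃ K₀ : ℕ, ∀ k, K₀ ≤ k → φ (2^k) ≤ r₀ := by
    have htend := hsum.tendsto_atTop_zero
    have hev : ∀ᶠ m : ℕ in atTop, ((m : ℝ) + 1) ^ (n - 1) * φ (m + 1) ^ n < r₀^n :=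
      htend.eventually_lt_const (by positivity)
    obtain ⟨m₀, hm₀⟩ := hev.exists
    have hφm : φ (m₀ + 1) < r₀ := by
      have h1 : φ (m₀+1)^n ≤ ((m₀:ℝ)+1)^(n-1) * φ (m₀+1)^n := by
        apply le_mul_of_one_le_left (pow_nonneg (hφpos _).le n)
        apply one_le_pow₀
        linarith [Nat.cast_nonneg (α := ℝ) m₀]
      have h2 : φ (m₀+1)^n < r₀^n := lt_of_le_of_lt h1 hm₀
      by_contra hcon
      push_neg at hcon
      have := pow_le_pow_left₀ hr₀pos.le hcon n
      linarith
    refine ⟨m₀ + 1, fun k hk => ?_⟩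
    have hk2 : m₀ + 1 ≤ 2^k := by
      have := Nat.lt_two_pow_self (n := k)
      omega
    exact le_trans (hφanti hk2) hφm.le
  -- per-k measure bound
  set Creal : ℝ := (2*(n:ℝ)*((n:ℝ)+1))^n with hCreal
  have hCk : ∀ k, K₀ ≤ k → μH[(n:ℝ)] (Cset k ∩ unitSphere n) ≤
      ENNReal.ofReal ((c * ((2:ℝ)^(k+1))^n) * (Creal * (2 * φ (2^k))^n)) := by
    intro k hk
    obtain ⟨hFfin, hFcard⟩ := hcount ((2:ℝ)^(k+1)) (one_le_pow₀ (by norm_num))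
    have hsplit : Cset k ∩ unitSphere n =
        ⋃ x ∈ hFfin.toFinset, (Metric.closedBall x (φ (2^k)) ∩ unitSphere n) := by
      rw [hCset]
      simp only [Set.Finite.mem_toFinset]
      rw [Set.iUnion₂_inter]
    rw [hsplit]
    calc μH[(n:ℝ)] (⋃ x ∈ hFfin.toFinset, (Metric.closedBall x (φ (2^k)) ∩ unitSphere n))
        ≤ ∑ x ∈ hFfin.toFinset, μH[(n:ℝ)] (Metric.closedBall x (φ (2^k)) ∩ unitSphere n) :=
          measure_biUnion_finset_le _ _
      _ ≤ ∑ _x ∈ hFfin.toFinset, ENNReal.ofReal (Creal * (2 * φ (2^k))^n) := by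
          apply Finset.sum_le_sum
          intro x hx
          rw [Set.Finite.mem_toFinset] at hx
          exact cap_bound n hn x hx.1 (hφpos _) (hK₀ k hk)
      _ = (hFfin.toFinset.card : ℝ≥0∞) * ENNReal.ofReal (Creal * (2 * φ (2^k))^n) := by
          rw [Finset.sum_const, nsmul_eq_mul]
      _ ≤ ENNReal.ofReal (c * ((2:ℝ)^(k+1))^n) * ENNReal.ofReal (Creal * (2 * φ (2^k))^n) := by
          gcongr
          have hcard : hFfin.toFinset.card = (ratPtsUpTo n ((2:ℝ)^(k+1))).ncard :=
            (Set.ncard_eq_toFinset_card _ hFfin).symm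
          rw [← ENNReal.ofReal_natCast]
          apply ENNReal.ofReal_le_ofReal
          rw [hcard]
          exact hFcard
      _ = ENNReal.ofReal ((c * ((2:ℝ)^(k+1))^n) * (Creal * (2 * φ (2^k))^n)) := by
          rw [← ENNReal.ofReal_mul (mul_nonneg hc.le (by positivity))]
  -- the convergent majorant series
  set g : ℕ → ℝ≥0∞ := fun m => ENNReal.ofReal ((2:ℝ) ^ (m * n) * φ (2 ^ (m+1)) ^ n) with hg
  have hgsum : ∑' m, g m ≠ ∞ := by
    have hs := condensed_summable n hn φ hφpos hφanti hsum
    rw [hg, ← ENNReal.ofReal_tsum_of_nonneg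
      (fun m => mul_nonneg (by positivity) (pow_nonneg (hφpos _).le n)) hs]
    exact ENNReal.ofReal_ne_top
  set M : ℝ≥0∞ := ENNReal.ofReal (c * (2:ℝ)^(2*n) * Creal * 2^n) with hM
  have hMne : M ≠ ∞ := ENNReal.ofReal_ne_top
  have hBg : ∀ m : ℕ, ENNReal.ofReal ((c * ((2:ℝ)^(m+2))^n) * (Creal * (2 * φ (2^(m+1)))^n))
      ≤ M * g m := by
    intro m
    have hCreal0 : (0:ℝ) ≤ Creal := by rw [hCreal]; positivity
    rw [hM, hg, ← ENNReal.ofReal_mul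
      (mul_nonneg (mul_nonneg (mul_nonneg hc.le (by positivity)) hCreal0) (by positivity))]
    apply ENNReal.ofReal_le_ofReal
    have he : ((2:ℝ)^(m+2))^n = 2^(2*n) * 2^(m*n) := by
      rw [← pow_mul, ← pow_add]
      congr 1
      ring
    rw [he, mul_pow]
    exact le_of_eq (by ring)
  -- main estimate
  have main : ∀ i : ℕ, (μH[(n : ℝ)]).restrict (unitSphere n) (approxSet n φ)
      ≤ M * ∑' j, g (j + (i + K₀)) := by
    intro i
    set K := i + K₀ + 1 with hK
    rw [Measure.restrict_apply' hSmeas]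
    calc μH[(n:ℝ)] (approxSet n φ ∩ unitSphere n)
        ≤ μH[(n:ℝ)] ((⋃ j : ℕ, Cset (j + K)) ∩ unitSphere n) := by
          apply measure_mono
          exact Set.inter_subset_inter_left _ (hcover K)
      _ = μH[(n:ℝ)] (⋃ j : ℕ, (Cset (j + K) ∩ unitSphere n)) := by
          rw [Set.iUnion_inter]
      _ ≤ ∑' j : ℕ, μH[(n:ℝ)] (Cset (j + K) ∩ unitSphere n) := measure_iUnion_le _
      _ ≤ ∑' j : ℕ, (M * g (j + (i + K₀))) := by
          apply ENNReal.tsum_le_tsum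
          intro j
          have h1 : K₀ ≤ j + K := by omega
          have h2 : j + K = (j + (i + K₀)) + 1 := by omega
          refine (hCk (j + K) h1).trans ?_
          rw [h2]
          exact hBg (j + (i + K₀))
      _ = M * ∑' j : ℕ, g (j + (i + K₀)) := ENNReal.tsum_mul_left
  have htail : Tendsto (fun m : ℕ => ∑' j : ℕ, g (j + m)) atTop (𝓝 0) :=
    ENNReal.tendsto_sum_nat_add g hgsum
  have htend : Tendsto (fun i : ℕ => M * ∑' j : ℕ, g (j + (i + K₀))) atTop (𝓝 0) := by
    have hcomp : Tendsto (fun i : ℕ => ∑' j : ℕ, g (j + (i + K₀))) atTop (𝓝 0) :=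
      htail.comp (tendsto_add_atTop_nat K₀)
    have := ENNReal.Tendsto.const_mul hcomp (Or.inr hMne)
    simpa using this
  exact le_antisymm (ge_of_tendsto' htend main) zero_le
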